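/- For fixed j ∈ ℕ, the normalized associated Legendre values satisfy lim_{m→∞} |P̃_{j+2m}^j(0)|² = 1/π². -/

import Mathlib

open Real Filter

/-- The square `|P̃_n^j(0)|²` of the normalized associated Legendre function at zero,
for `n + j` even. -/
noncomputable def ptildeSq (n j : ℕ) : ℝ :=
  (2 * n + 1) / (4 * Real.pi) *
    ((Nat.doubleFactorial (n - j - 1) * Nat.doubleFactorial (n + j - 1) : ℝ) /
      (Nat.doubleFactorial (n - j) * Nat.doubleFactorial (n + j) : ℝ))

/-- `D m = (2m-1)!! / (2m)!!`. -/
noncomputable def ddRatio (m : ℕ) : ℝ :=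
  (Nat.doubleFactorial (2 * m - 1) : ℝ) / (Nat.doubleFactorial (2 * m) : ℝ)

lemma dd_mul (m : ℕ) :
    Nat.doubleFactorial (2 * m) * Nat.doubleFactorial (2 * m - 1) = Nat.factorial (2 * m) := by
  cases m with
  | zero => rfl
  | succ n =>
    have h : 2 * (n + 1) = (2 * n + 1) + 1 := by ring
    rw [h]
    have := Nat.factorial_eq_mul_doubleFactorial (2 * n + 1)
    simpa using this.symm

lemma key_eq (m : ℕ) :
    (2 * (m : ℝ) + 1) * ddRatio m ^ 2 = (Real.Wallis.W m)⁻¹ := by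
  rw [Real.Wallis.W_eq_factorial_ratio]
  have h1 : ((Nat.doubleFactorial (2 * m)) : ℝ) = 2 ^ m * Nat.factorial m := by
    exact_mod_cast congrArg (Nat.cast : ℕ → ℝ) (Nat.doubleFactorial_two_mul m)
  have h2 : ((Nat.doubleFactorial (2 * m)) : ℝ) * (Nat.doubleFactorial (2 * m - 1) : ℝ)
      = (Nat.factorial (2 * m) : ℝ) := by exact_mod_cast congrArg (Nat.cast : ℕ → ℝ) (dd_mul m)
  have hdne : ((Nat.doubleFactorial (2 * m)) : ℝ) ≠ 0 := by
    exact_mod_cast (Nat.doubleFactorial_pos _).ne'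
  have hdne' : ((Nat.doubleFactorial (2 * m - 1)) : ℝ) ≠ 0 := by
    exact_mod_cast (Nat.doubleFactorial_pos _).ne'
  rw [ddRatio, div_pow, inv_div, ← h2]
  have h3 : (2 : ℝ) ^ (4 * m) * (Nat.factorial m : ℝ) ^ 4
      = ((Nat.doubleFactorial (2 * m)) : ℝ) ^ 4 := by
    rw [h1, mul_comm 4 m, pow_mul]; ring
  rw [h3]
  field_simp

lemma tendsto_key : Tendsto (fun m : ℕ => (2 * (m : ℝ) + 1) * ddRatio m ^ 2)
    atTop (nhds (2 / Real.pi)) := by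
  have h := Real.Wallis.tendsto_W_nhds_pi_div_two.inv₀ (by positivity : (Real.pi / 2 : ℝ) ≠ 0)
  rw [inv_div] at h
  exact h.congr fun m => (key_eq m).symm

lemma tendsto_ratio (b d : ℝ) (hd : 0 < d) :
    Tendsto (fun m : ℕ => (4 * (m : ℝ) + b) / (4 * (m : ℝ) + d)) atTop (nhds 1) := by
  have h1 : Tendsto (fun m : ℕ => 4 * (m : ℝ) + d) atTop atTop :=
    tendsto_atTop_add_const_right _ d
      (tendsto_natCast_atTop_atTop.const_mul_atTop (by norm_num))
  have h0 : Tendsto (fun m : ℕ => (b - d) / (4 * (m : ℝ) + d)) atTop (nhds 0) :=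
    tendsto_const_nhds.div_atTop h1
  have h2 := h0.const_add 1
  rw [add_zero] at h2
  refine h2.congr fun m => ?_
  have hne : 4 * (m : ℝ) + d ≠ 0 := by positivity
  field_simp
  ring

theorem ptildeSq_limit (j : ℕ) :
    Tendsto (fun m : ℕ => ptildeSq (j + 2 * m) j) atTop (nhds (1 / Real.pi ^ 2)) := by
  have hpi : (Real.pi : ℝ) ≠ 0 := Real.pi_ne_zero
  -- rewrite ptildeSq in terms of ddRatio
  have heq : ∀ m : ℕ, ptildeSq (j + 2 * m) j
      = (2 * ((j : ℝ) + 2 * m) + 1) / (4 * Real.pi) * (ddRatio m * ddRatio (m + j)) := by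
    intro m
    unfold ptildeSq ddRatio
    have e1 : j + 2 * m - j - 1 = 2 * m - 1 := by omega
    have e2 : j + 2 * m - j = 2 * m := by omega
    have e3 : j + 2 * m + j - 1 = 2 * (m + j) - 1 := by omega
    have e4 : j + 2 * m + j = 2 * (m + j) := by omega
    rw [e1, e2, e3, e4]
    push_cast
    rw [div_mul_div_comm]
    ring
  -- the three convergent factors
  have hg := tendsto_key
  have hh : Tendsto (fun m : ℕ => (2 * ((m + j : ℕ) : ℝ) + 1) * ddRatio (m + j) ^ 2)
      atTop (nhds (2 / Real.pi)) := tendsto_key.comp (tendsto_add_atTop_nat j)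
  have hc : Tendsto (fun m : ℕ =>
        (1 / (4 * Real.pi ^ 2)) * ((4 * (m : ℝ) + (2 * j + 1)) / (4 * (m : ℝ) + 2))
          * ((4 * (m : ℝ) + (2 * j + 1)) / (4 * (m : ℝ) + (4 * j + 2))))
      atTop (nhds ((1 / (4 * Real.pi ^ 2)) * 1 * 1)) :=
    ((tendsto_const_nhds.mul (tendsto_ratio _ 2 (by norm_num))).mul
      (tendsto_ratio _ (4 * j + 2) (by positivity)))
  -- the square converges
  have hsq : Tendsto (fun m : ℕ => ptildeSq (j + 2 * m) j ^ 2) atTop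
      (nhds ((1 / Real.pi ^ 2) ^ 2)) := by
    have hlim := (hc.mul hg).mul hh
    have hval : (1 / (4 * Real.pi ^ 2)) * 1 * 1 * (2 / Real.pi) * (2 / Real.pi)
        = (1 / Real.pi ^ 2) ^ 2 := by field_simp; ring
    rw [hval] at hlim
    refine hlim.congr fun m => ?_
    rw [heq m]
    have h1 : (2 * (m : ℝ) + 1) ≠ 0 := by positivity
    have h2 : (2 * ((m + j : ℕ) : ℝ) + 1) ≠ 0 := by positivity
    have h3 : 4 * (m : ℝ) + 2 ≠ 0 := by positivity
    have h4 : 4 * (m : ℝ) + (4 * (j : ℝ) + 2) ≠ 0 := by positivity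
    push_cast
    field_simp
    ring
  have hnn : ∀ m : ℕ, 0 ≤ ptildeSq (j + 2 * m) j := by
    intro m
    unfold ptildeSq
    positivity
  have hfin := (Real.continuous_sqrt.tendsto _).comp hsq
  have hs : Real.sqrt ((1 / Real.pi ^ 2) ^ 2) = 1 / Real.pi ^ 2 :=
    Real.sqrt_sq (by positivity)
  rw [hs] at hfin
  exact hfin.congr fun m => Real.sqrt_sq (hnn m)
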